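/- Operator product formula: H_n(x,s,q) = (x − q^{n−1} s D_q)(x − q^{n−2} s D_q)···(x − s D_q) applied to 1, where D_q is the q-derivative operator and x denotes multiplication by x. -/

import Mathlib

noncomputable section

/-- The q-integer `[n]_q = (1 - q^n)/(1 - q)`. -/
def qnat (q : ℝ) (n : ℕ) : ℝ := (1 - q ^ n) / (1 - q)

/-- The q-factorial `[n]_q!`. -/
def qfac (q : ℝ) (n : ℕ) : ℝ := ∏ j ∈ Finset.range n, qnat q (j + 1)

/-- The Gaussian binomial coefficient. -/
def qbinom (q : ℝ) (n k : ℕ) : ℝ := qfac q n / (qfac q k * qfac q (n - k))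

/-- The odd q-double factorial `[2k-1]_q!! = [1]_q [3]_q ⋯ [2k-1]_q`. -/
def qdf (q : ℝ) (k : ℕ) : ℝ := ∏ i ∈ Finset.range k, qnat q (2 * i + 1)

/-- The bivariate q-Hermite polynomial
`H n (x,s,q) = ∑_{2k ≤ n} (-s)^k q^(k²) qbinom(n,2k) [2k-1]_q!! x^(n-2k)`. -/
def qHermite (q s : ℝ) (n : ℕ) (x : ℝ) : ℝ :=
  ∑ k ∈ Finset.range (n / 2 + 1),
    (-s) ^ k * q ^ (k ^ 2) * qbinom q n (2 * k) * qdf q k * x ^ (n - 2 * k)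

open Polynomial

/-- The q-Hermite polynomial as an element of `ℝ[X]` (variable `x`). -/
def qHermitePoly (q s : ℝ) (n : ℕ) : Polynomial ℝ :=
  ∑ k ∈ Finset.range (n / 2 + 1),
    C ((-s) ^ k * q ^ (k ^ 2) * qbinom q n (2 * k) * qdf q k) * X ^ (n - 2 * k)

/-- The q-derivative on polynomials, determined by `D_q x^m = [m]_q x^(m-1)`. -/
def qDeriv (q : ℝ) (p : Polynomial ℝ) : Polynomial ℝ :=
  p.sum fun m a => C (a * qnat q m) * X ^ (m - 1)

/-- Apply the operators `(x - q^i s D_q)` for the exponents `i` in the list `l`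
(rightmost factor = last element of `l` acts first) to the constant polynomial 1. -/
def qOpProd (q s : ℝ) (l : List ℕ) : Polynomial ℝ :=
  l.foldr (fun i p => X * p - C (q ^ i * s) * qDeriv q p) 1

end


noncomputable section Aux

open Polynomial Finset

def HC (q s : ℝ) (n k : ℕ) : ℝ := (-s) ^ k * q ^ (k ^ 2) * qbinom q n (2 * k) * qdf q k

lemma qHermitePoly_eq (q s : ℝ) (n : ℕ) :
    qHermitePoly q s n = ∑ k ∈ Finset.range (n / 2 + 1), C (HC q s n k) * X ^ (n - 2 * k) := rfl

variable {q : ℝ}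

lemma one_sub_q_ne (hq1 : q < 1) : (1 : ℝ) - q ≠ 0 := by linarith

lemma qnat_pos (hq : 0 < q) (hq1 : q < 1) (m : ℕ) : 0 < qnat q (m + 1) := by
  have h1 : q ^ (m+1) < 1 := pow_lt_one₀ hq.le hq1 (Nat.succ_ne_zero m)
  have : (0:ℝ) < 1 - q := by linarith
  exact div_pos (by linarith) this

lemma qnat_ne (hq : 0 < q) (hq1 : q < 1) (m : ℕ) : qnat q (m + 1) ≠ 0 := (qnat_pos hq hq1 m).ne'

lemma qnat_zero : qnat q 0 = 0 := by simp [qnat]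

lemma qnat_one (hq1 : q < 1) : qnat q 1 = 1 := by
  have := one_sub_q_ne (q := q) hq1
  rw [qnat, pow_one, div_self this]

lemma qnat_add (hq1 : q < 1) (a b : ℕ) : qnat q (a + b) = qnat q a + q ^ a * qnat q b := by
  have := one_sub_q_ne (q := q) hq1
  simp only [qnat, pow_add]
  field_simp
  ring

lemma qfac_zero : qfac q 0 = 1 := by simp [qfac]

lemma qfac_succ (m : ℕ) : qfac q (m + 1) = qfac q m * qnat q (m + 1) :=
  Finset.prod_range_succ _ _

lemma qfac_pos (hq : 0 < q) (hq1 : q < 1) (m : ℕ) : 0 < qfac q m :=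
  Finset.prod_pos fun i _ => qnat_pos hq hq1 i

lemma qfac_ne (hq : 0 < q) (hq1 : q < 1) (m : ℕ) : qfac q m ≠ 0 := (qfac_pos hq hq1 m).ne'

lemma qdf_succ (k : ℕ) : qdf q (k + 1) = qdf q k * qnat q (2 * k + 1) :=
  Finset.prod_range_succ _ _

lemma qbinom_zero (hq : 0 < q) (hq1 : q < 1) (n : ℕ) : qbinom q n 0 = 1 := by
  have := qfac_ne hq hq1 n
  simp [qbinom, qfac_zero, div_self this]

lemma HC_zero (hq : 0 < q) (hq1 : q < 1) (s : ℝ) (n : ℕ) : HC q s n 0 = 1 := by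
  simp [HC, qdf, qbinom_zero hq hq1]

end Aux

section Aux2
open Polynomial Finset
variable {q : ℝ}

lemma key (hq : 0 < q) (hq1 : q < 1) (s : ℝ) (a j : ℕ) :
    HC q s (a+2*j+3) (j+1) = HC q s (a+2*j+2) (j+1)
      - q^(a+2*j+2) * s * (HC q s (a+2*j+2) j * qnat q (a+2)) := by
  have hfa := qfac_ne hq hq1 a
  have hf2j := qfac_ne hq hq1 (2*j)
  have hfn := qfac_ne hq hq1 (a+2*j+2)
  have hn1 : qnat q (a+1) ≠ 0 := qnat_ne hq hq1 a
  have hn2 : qnat q (a+2) ≠ 0 := qnat_ne hq hq1 (a+1)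
  have hn3 : qnat q (2*j+1) ≠ 0 := qnat_ne hq hq1 (2*j)
  have hn4 : qnat q (2*j+2) ≠ 0 := qnat_ne hq hq1 (2*j+1)
  have e1 : 2*(j+1) = 2*j+2 := by ring
  have e2 : a+2*j+3 - (2*j+2) = a+1 := by omega
  have e3 : a+2*j+2 - (2*j+2) = a := by omega
  have e4 : a+2*j+2 - 2*j = a+2 := by omega
  have f1 : qfac q (a+2*j+3) = qfac q (a+2*j+2) * qnat q (a+2*j+3) := by
    rw [show a+2*j+3 = (a+2*j+2)+1 from by ring]; exact qfac_succ _
  have f2 : qfac q (2*j+2) = qfac q (2*j) * qnat q (2*j+1) * qnat q (2*j+2) := by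
    rw [show 2*j+2 = (2*j+1)+1 from rfl, qfac_succ, qfac_succ]
  have f3 : qfac q (a+1) = qfac q a * qnat q (a+1) := qfac_succ a
  have f4 : qfac q (a+2) = qfac q a * qnat q (a+1) * qnat q (a+2) := by
    rw [show a+2 = (a+1)+1 from rfl, qfac_succ, qfac_succ]
  have f5 : qdf q (j+1) = qdf q j * qnat q (2*j+1) := qdf_succ j
  have f6 : qnat q (a+2*j+3) = qnat q (a+1) + q^(a+1) * qnat q (2*j+2) := by
    rw [show a+2*j+3 = (a+1)+(2*j+2) from by ring]; exact qnat_add hq1 _ _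
  have p1 : ((-s):ℝ)^(j+1) = (-s)^j * (-s) := pow_succ _ _
  have p2 : (q:ℝ)^((j+1)^2) = q^(j^2) * q^(2*j+1) := by
    rw [← pow_add]; congr 1; ring
  simp only [HC, qbinom, e1, e2, e3, e4, f1, f2, f3, f4, f5, f6, p1, p2]
  field_simp
  ring

lemma bdry (hq : 0 < q) (hq1 : q < 1) (s : ℝ) (m : ℕ) :
    HC q s (2*m+2) (m+1) = - (q^(2*m+1) * s) * (HC q s (2*m+1) m * qnat q 1) := by
  have hf1 := qfac_ne hq hq1 (2*m+2)
  have hf2 := qfac_ne hq hq1 (2*m)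
  have e1 : 2*(m+1) = 2*m+2 := by ring
  have e2 : 2*m+2 - (2*m+2) = 0 := by omega
  have e3 : 2*m+1 - 2*m = 1 := by omega
  have f1 : qfac q (2*m+2) = qfac q (2*m) * qnat q (2*m+1) * qnat q (2*m+2) := by
    rw [show 2*m+2 = (2*m+1)+1 from rfl, qfac_succ, qfac_succ]
  have f2 : qfac q (2*m+1) = qfac q (2*m) * qnat q (2*m+1) := qfac_succ _
  have f3 : qfac q 1 = 1 := by rw [show (1:ℕ) = 0+1 from rfl, qfac_succ, qfac_zero, qnat_one hq1]; ring
  have f5 : qdf q (m+1) = qdf q m * qnat q (2*m+1) := qdf_succ m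
  have p1 : ((-s):ℝ)^(m+1) = (-s)^m * (-s) := pow_succ _ _
  have p2 : (q:ℝ)^((m+1)^2) = q^(m^2) * q^(2*m+1) := by
    rw [← pow_add]; congr 1; ring
  have hn3 : qnat q (2*m+1) ≠ 0 := qnat_ne hq hq1 (2*m)
  have hn4 : qnat q (2*m+2) ≠ 0 := qnat_ne hq hq1 (2*m+1)
  simp only [HC, qbinom, e1, e2, e3, qfac_zero, f1, f2, f3, f5, p1, p2, qnat_one hq1]
  field_simp

end Aux2

section Aux3
open Polynomial Finset
variable {q : ℝ}

lemma qDeriv_zero : qDeriv q 0 = 0 := Polynomial.sum_zero_index _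

lemma qDeriv_add (p r : Polynomial ℝ) : qDeriv q (p + r) = qDeriv q p + qDeriv q r := by
  unfold qDeriv
  exact Polynomial.sum_add_index p r _ (by intro i; simp) (by intro i b c; simp [add_mul])

lemma qDeriv_sum {ι : Type*} (t : Finset ι) (f : ι → Polynomial ℝ) :
    qDeriv q (∑ i ∈ t, f i) = ∑ i ∈ t, qDeriv q (f i) := by
  classical
  induction t using Finset.induction_on with
  | empty => simp [qDeriv_zero]
  | insert _ _ h ih => rw [Finset.sum_insert h, qDeriv_add, ih, Finset.sum_insert h]

lemma qDeriv_CXpow (a : ℝ) (m : ℕ) :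
    qDeriv q (C a * X ^ m) = C (a * qnat q m) * X ^ (m - 1) := by
  rw [C_mul_X_pow_eq_monomial]
  unfold qDeriv
  exact Polynomial.sum_monomial_index _ _ (by simp)

end Aux3

section Aux4
open Polynomial Finset
variable {q : ℝ}

lemma rec_step (hq : 0 < q) (hq1 : q < 1) (s : ℝ) (n : ℕ) :
    qHermitePoly q s (n+1) =
      X * qHermitePoly q s n - C (q^n * s) * qDeriv q (qHermitePoly q s n) := by
  rw [qHermitePoly_eq, qHermitePoly_eq, qDeriv_sum]
  simp only [qDeriv_CXpow]
  rw [Finset.mul_sum, Finset.mul_sum]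
  have r1 : ∀ k ∈ Finset.range (n/2+1),
      X * (C (HC q s n k) * X ^ (n - 2*k)) = C (HC q s n k) * X ^ (n - 2*k + 1) := by
    intro k _; ring
  have r2 : ∀ k ∈ Finset.range (n/2+1),
      C (q^n * s) * (C (HC q s n k * qnat q (n - 2*k)) * X ^ (n - 2*k - 1))
        = C (q^n * s * (HC q s n k * qnat q (n - 2*k))) * X ^ (n - 2*k - 1) := by
    intro k _; simp [C_mul]; ring
  rw [Finset.sum_congr rfl r1, Finset.sum_congr rfl r2]
  rcases Nat.even_or_odd n with h | h
  · -- n even, n = 2*m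
    obtain ⟨m, rfl⟩ : ∃ m, n = 2 * m := by rcases h with ⟨m, hm⟩; exact ⟨m, by omega⟩
    have d1 : (2*m+1)/2 = m := by omega
    have d2 : (2*m)/2 = m := by omega
    rw [d1, d2]
    rw [Finset.sum_range_succ' (fun k => C (HC q s (2*m+1) k) * X ^ (2*m+1 - 2*k)),
        Finset.sum_range_succ' (fun k => C (HC q s (2*m) k) * X ^ (2*m - 2*k + 1)),
        Finset.sum_range_succ (fun k => C (q^(2*m) * s * (HC q s (2*m) k * qnat q (2*m - 2*k))) * X ^ (2*m - 2*k - 1))]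
    have z1 : C (q^(2*m) * s * (HC q s (2*m) m * qnat q (2*m - 2*m))) * X ^ (2*m - 2*m - 1) = 0 := by
      simp [show 2*m - 2*m = 0 from by omega, qnat_zero]
    rw [z1, add_zero]
    have c1 : C (HC q s (2*m+1) 0) * X ^ (2*m+1 - 2*0) = C (HC q s (2*m) 0) * X ^ (2*m - 2*0 + 1) := by
      rw [HC_zero hq hq1, HC_zero hq hq1, show 2*m+1 - 2*0 = 2*m - 2*0 + 1 from by omega]
    rw [c1, add_sub_right_comm]
    congr 1
    rw [← Finset.sum_sub_distrib]
    refine Finset.sum_congr rfl fun k hk => ?_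
    have hk' := Finset.mem_range.mp hk
    have hkey := key hq hq1 s (2*(m-k-1)) k
    rw [show 2*(m-k-1)+2*k+3 = 2*m+1 from by omega,
        show 2*(m-k-1)+2*k+2 = 2*m from by omega,
        show 2*(m-k-1)+2 = 2*m - 2*k from by omega] at hkey
    rw [show 2*m+1 - 2*(k+1) = 2*m - 2*k - 1 from by omega,
        show 2*m - 2*(k+1) + 1 = 2*m - 2*k - 1 from by omega,
        hkey, map_sub, sub_mul]
  · -- n odd, n = 2*m+1
    obtain ⟨m, rfl⟩ : ∃ m, n = 2 * m + 1 := by rcases h with ⟨m, hm⟩; exact ⟨m, by omega⟩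
    have d1 : (2*m+1+1)/2 = m+1 := by omega
    have d2 : (2*m+1)/2 = m := by omega
    rw [d1, d2]
    rw [Finset.sum_range_succ (fun k => C (HC q s (2*m+1+1) k) * X ^ (2*m+1+1 - 2*k)),
        Finset.sum_range_succ (fun k => C (q^(2*m+1) * s * (HC q s (2*m+1) k * qnat q (2*m+1 - 2*k))) * X ^ (2*m+1 - 2*k - 1))]
    have b1 : C (HC q s (2*m+1+1) (m+1)) * X ^ (2*m+1+1 - 2*(m+1))
        = - (C (q^(2*m+1) * s * (HC q s (2*m+1) m * qnat q (2*m+1 - 2*m))) * X ^ (2*m+1 - 2*m - 1)) := by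
      rw [show 2*m+1+1 = 2*m+2 from rfl]
      rw [bdry hq hq1 s m, show 2*m+1 - 2*m = 1 from by omega,
          show 2*m+2 - 2*(m+1) = 0 from by omega]
      norm_num [C_mul]
    rw [b1]
    rw [Finset.sum_range_succ' (fun k => C (HC q s (2*m+1+1) k) * X ^ (2*m+1+1 - 2*k)),
        Finset.sum_range_succ' (fun k => C (HC q s (2*m+1) k) * X ^ (2*m+1 - 2*k + 1))]
    have c1 : C (HC q s (2*m+1+1) 0) * X ^ (2*m+1+1 - 2*0) = C (HC q s (2*m+1) 0) * X ^ (2*m+1 - 2*0 + 1) := by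
      rw [HC_zero hq hq1, HC_zero hq hq1, show 2*m+1+1 - 2*0 = 2*m+1 - 2*0 + 1 from by omega]
    rw [c1]
    have hAB : (∑ k ∈ Finset.range m, C (HC q s (2*m+1+1) (k+1)) * X ^ (2*m+1+1 - 2*(k+1)))
        = (∑ k ∈ Finset.range m, C (HC q s (2*m+1) (k+1)) * X ^ (2*m+1 - 2*(k+1) + 1))
          - ∑ k ∈ Finset.range m, C (q^(2*m+1) * s * (HC q s (2*m+1) k * qnat q (2*m+1 - 2*k))) * X ^ (2*m+1 - 2*k - 1) := by
      rw [← Finset.sum_sub_distrib]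
      refine Finset.sum_congr rfl fun k hk => ?_
      have hk' := Finset.mem_range.mp hk
      have hkey := key hq hq1 s (2*(m-k)-1) k
      rw [show 2*(m-k)-1+2*k+3 = 2*m+1+1 from by omega,
          show 2*(m-k)-1+2*k+2 = 2*m+1 from by omega,
          show 2*(m-k)-1+2 = 2*m+1 - 2*k from by omega] at hkey
      rw [show 2*m+1+1 - 2*(k+1) = 2*m+1 - 2*k - 1 from by omega,
          show 2*m+1 - 2*(k+1) + 1 = 2*m+1 - 2*k - 1 from by omega,
          hkey, map_sub, sub_mul]
    rw [hAB]
    ring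
end Aux4

theorem qHermite_operator_product (q : ℝ) (hq : 0 < q) (hq1 : q < 1) (s : ℝ) (n : ℕ) :
    qHermitePoly q s n = qOpProd q s (List.range n).reverse := by
  induction n with
  | zero =>
    simp [qHermitePoly, qOpProd, qbinom_zero hq hq1, qdf]
  | succ n ih =>
    rw [show (List.range (n+1)).reverse = n :: (List.range n).reverse from by
      simp [List.range_succ]]
    show qHermitePoly q s (n+1)
      = Polynomial.X * qOpProd q s (List.range n).reverse
        - Polynomial.C (q^n * s) * qDeriv q (qOpProd q s (List.range n).reverse)
    rw [← ih]
    exact rec_step hq hq1 s n
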